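/- Let F = F_q be a finite field of size q, let 0 ≤ m ≤ n, and let A be an m × n matrix over F of rank m. If B is an (n+ℓ) × n matrix obtained by appending n − m + ℓ rows chosen uniformly and independently at random from F^(1×n) to A, then the probability that rank(B) < n is at most q^(−ℓ). -/

import Mathlib

open Matrix Module Finset

section aux

variable {F : Type} [Field F] [Fintype F] [DecidableEq F]

/-- The dot-product functional `v ↦ v ⬝ᵥ x`. -/
noncomputable def dpf (n : ℕ) (x : Fin n → F) : Module.Dual F (Fin n → F) where
  toFun v := v ⬝ᵥ x
  map_add' a b := add_dotProduct a b x
  map_smul' c a := by simp [smul_dotProduct]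

lemma card_perp {n : ℕ} (x : Fin n → F) (hx : x ≠ 0) :
    Nat.card {v : Fin n → F // v ⬝ᵥ x = 0} = Fintype.card F ^ (n - 1) := by
  have hf : dpf n x ≠ 0 := by
    obtain ⟨i, hi⟩ := Function.ne_iff.mp hx
    intro h
    apply hi
    have := congrFun (congrArg DFunLike.coe h) (Pi.single i 1)
    simpa [dpf, single_dotProduct] using this
  have h1 : Nat.card {v : Fin n → F // v ⬝ᵥ x = 0}
      = Nat.card (LinearMap.ker (dpf n x)) :=
    Nat.card_congr (Equiv.subtypeEquivRight (fun v => Iff.rfl))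
  have h2 : finrank F (LinearMap.ker (dpf n x)) + 1 = n := by
    have := Module.Dual.finrank_ker_add_one_of_ne_zero hf
    rwa [Module.finrank_pi, Fintype.card_fin] at this
  letI : Fintype (LinearMap.ker (dpf n x)) := Fintype.ofFinite _
  rw [h1, Nat.card_eq_fintype_card, card_eq_pow_finrank (K := F)]
  congr 1
  omega

omit [Fintype F] [DecidableEq F] in
lemma rank_lt_iff {s : Type} [Fintype s] {n : ℕ} (M : Matrix s (Fin n) F) :
    M.rank < n ↔ ∃ x ≠ 0, M.mulVec x = 0 := by
  have h := LinearMap.finrank_range_add_finrank_ker M.mulVecLin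
  simp only [Module.finrank_pi, Fintype.card_fin] at h
  have hr : M.rank = finrank F (LinearMap.range M.mulVecLin) := rfl
  constructor
  · intro hlt
    have hk : finrank F (LinearMap.ker M.mulVecLin) ≠ 0 := by omega
    have hne : LinearMap.ker M.mulVecLin ≠ ⊥ := by
      intro hbot
      rw [hbot] at hk
      simp at hk
    obtain ⟨x, hxmem, hx0⟩ := (Submodule.ne_bot_iff _).mp hne
    exact ⟨x, hx0, hxmem⟩
  · rintro ⟨x, hx0, hx⟩
    have hne : LinearMap.ker M.mulVecLin ≠ ⊥ :=
      (Submodule.ne_bot_iff _).mpr ⟨x, hx, hx0⟩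
    have hk : finrank F (LinearMap.ker M.mulVecLin) ≠ 0 := by
      intro h0
      exact hne (Submodule.finrank_eq_zero.mp h0)
    omega

end aux

theorem stmt_7 (F : Type) [Field F] [Fintype F] [DecidableEq F]
    (m n ℓ : ℕ) (hmn : m ≤ n)
    (A : Matrix (Fin m) (Fin n) F) (hA : A.rank = m) :
    (Nat.card {r : Fin (n - m + ℓ) → Fin n → F //
        (Matrix.fromRows A (Matrix.of r)).rank < n} : ℝ) /
      (Fintype.card (Fin (n - m + ℓ) → Fin n → F) : ℝ)
      ≤ (Fintype.card F : ℝ) ^ (-(ℓ : ℤ)) := by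
  classical
  set q := Fintype.card F with hq
  have hq0 : (0 : ℝ) < (q : ℝ) := by
    have := Fintype.card_pos (α := F)
    positivity
  rcases Nat.eq_zero_or_pos n with hn | hn
  · subst hn
    haveI : IsEmpty {r : Fin (0 - m + ℓ) → Fin 0 → F //
        (Matrix.fromRows A (Matrix.of r)).rank < 0} :=
      ⟨fun r => Nat.not_lt_zero _ r.2⟩
    rw [Nat.card_of_isEmpty]
    simp only [Nat.cast_zero, zero_div]
    positivity
  set k := n - m + ℓ with hk
  set P : (Fin k → Fin n → F) → Prop :=
    fun r => (Matrix.fromRows A (Matrix.of r)).rank < n with hP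
  have hcard_sub : Nat.card {r // P r} = (univ.filter P).card := by
    rw [Nat.card_eq_fintype_card, Fintype.card_subtype]
  set K := LinearMap.ker A.mulVecLin with hK
  have hKcard : Fintype.card K = q ^ (n - m) := by
    have h := LinearMap.finrank_range_add_finrank_ker A.mulVecLin
    simp only [Module.finrank_pi, Fintype.card_fin] at h
    have hr : A.rank = finrank F (LinearMap.range A.mulVecLin) := rfl
    have hkr : finrank F K = n - m := by rw [hK]; omega
    rw [card_eq_pow_finrank (K := F), hkr]
  have hsubset : (univ.filter P) ⊆
      (univ.filter (fun x : Fin n → F => x ∈ K ∧ x ≠ 0)).biUnion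
        (fun x => univ.filter (fun r : Fin k → Fin n → F => ∀ i, r i ⬝ᵥ x = 0)) := by
    intro r hr
    rw [mem_filter] at hr
    have hr2 : (Matrix.fromRows A (Matrix.of r)).rank < n := hr.2
    obtain ⟨x, hx0, hxv⟩ := (rank_lt_iff _).mp hr2
    rw [Finset.mem_biUnion]
    refine ⟨x, ?_, ?_⟩
    · rw [mem_filter]
      refine ⟨mem_univ _, ?_, hx0⟩
      rw [hK, LinearMap.mem_ker]
      have := congrFun hxv
      ext i
      simpa [Matrix.fromRows_mulVec] using this (Sum.inl i)
    · rw [mem_filter]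
      refine ⟨mem_univ _, fun i => ?_⟩
      have := congrFun hxv (Sum.inr i)
      simpa [Matrix.fromRows_mulVec, Matrix.mulVec] using this
  have hterm : ∀ x : Fin n → F, x ≠ 0 →
      (univ.filter (fun r : Fin k → Fin n → F => ∀ i, r i ⬝ᵥ x = 0)).card
        = (q ^ (n - 1)) ^ k := by
    intro x hx
    rw [← Fintype.card_subtype]
    rw [Fintype.card_congr (Equiv.subtypePiEquivPi
      (p := fun _ (v : Fin n → F) => v ⬝ᵥ x = 0))]
    rw [Fintype.card_pi]
    have hc : Fintype.card {v : Fin n → F // v ⬝ᵥ x = 0} = q ^ (n - 1) := by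
      rw [← Nat.card_eq_fintype_card, card_perp x hx]
    simp [hc]
  have hbound : (univ.filter P).card ≤ q ^ (n - m) * (q ^ (n - 1)) ^ k := by
    calc (univ.filter P).card
        ≤ ∑ x ∈ univ.filter (fun x : Fin n → F => x ∈ K ∧ x ≠ 0),
            (univ.filter (fun r : Fin k → Fin n → F => ∀ i, r i ⬝ᵥ x = 0)).card :=
          le_trans (Finset.card_le_card hsubset) (Finset.card_biUnion_le)
      _ = ∑ x ∈ univ.filter (fun x : Fin n → F => x ∈ K ∧ x ≠ 0),
            (q ^ (n - 1)) ^ k := by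
          apply Finset.sum_congr rfl
          intro x hx
          rw [mem_filter] at hx
          exact hterm x hx.2.2
      _ = (univ.filter (fun x : Fin n → F => x ∈ K ∧ x ≠ 0)).card
            * (q ^ (n - 1)) ^ k := by rw [Finset.sum_const, smul_eq_mul]
      _ ≤ Fintype.card K * (q ^ (n - 1)) ^ k := by
          apply Nat.mul_le_mul_right
          rw [Fintype.card_subtype]
          apply Finset.card_le_card
          intro x hx
          rw [mem_filter] at hx ⊢
          exact ⟨hx.1, hx.2.1⟩
      _ = q ^ (n - m) * (q ^ (n - 1)) ^ k := by rw [hKcard]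
  have htotal : Fintype.card (Fin k → Fin n → F) = q ^ (n * k) := by
    simp [Fintype.card_fun, ← pow_mul, mul_comm, hq]
  rw [hcard_sub, htotal]
  push_cast
  rw [div_le_iff₀ (by positivity)]
  have hexp : n * k = ((n - m) + (n - 1) * k) + ℓ := by
    have h1 : (n - 1) * k + k = n * k := by
      calc (n - 1) * k + k = (n - 1 + 1) * k := by ring
        _ = n * k := by congr 1; omega
    omega
  have hrhs : (q : ℝ) ^ (-(ℓ : ℤ)) * (q : ℝ) ^ (n * k)
      = (q : ℝ) ^ ((n - m) + (n - 1) * k) := by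
    rw [hexp, pow_add, _root_.zpow_neg, zpow_natCast]
    field_simp
  rw [hrhs]
  calc ((univ.filter P).card : ℝ)
      ≤ ((q ^ (n - m) * (q ^ (n - 1)) ^ k : ℕ) : ℝ) := by exact_mod_cast hbound
    _ = (q : ℝ) ^ ((n - m) + (n - 1) * k) := by
        rw [hk]
        push_cast
        ring
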